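/- arXiv:math/0604001 — 2 statements merged into one kernel-verified Lean document; each statement's English description precedes it below -/
import Mathlib

section
/- Let A be an integer matrix. The set of non-negative integer solutions x of Ax = 0 is generated under addition by a finite set of solutions; that is, there exists a finite set F of non-negative integer solutions such that every non-negative integer solution is a finite sum (with non-negative integer multiplicities) of elements of F. -/
/-- Haken's finiteness theorem: the non-negative integer solutions of a homogeneous
integer linear system `A x = 0` are generated under addition by a finite set. -/
theorem haken_finite_generation (m n : ℕ) (A : Matrix (Fin m) (Fin n) ℤ) :
    ∃ F : Finset (Fin n → ℕ),
      (∀ f ∈ F, A.mulVec (fun j => (f j : ℤ)) = 0) ∧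
      (∀ x : Fin n → ℕ, A.mulVec (fun j => (x j : ℤ)) = 0 →
        ∃ c : (Fin n → ℕ) → ℕ, x = ∑ f ∈ F, c f • f) := by
  classical
  set S : Set (Fin n → ℕ) := {x | A.mulVec (fun j => (x j : ℤ)) = 0} with hS
  set M : Set (Fin n → ℕ) :=
    {f | f ∈ S ∧ f ≠ 0 ∧ ∀ g ∈ S, g ≠ 0 → g ≤ f → g = f} with hM
  -- M is an antichain, hence finite by Dickson's lemma
  have hanti : IsAntichain (· ≤ ·) M := by
    intro f hf g hg hfg hle
    exact hfg (hg.2.2 f hf.1 hf.2.1 hle)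
  have hMfin : M.Finite :=
    hanti.finite_of_partiallyWellOrderedOn
      (Set.isPWO_of_wellQuasiOrderedLE M)
  -- existence of a minimal element below any nonzero solution
  have hmin : ∀ x ∈ S, x ≠ 0 → ∃ f ∈ M, f ≤ x := by
    intro x hx hx0
    set T : Set (Fin n → ℕ) := {g | g ∈ S ∧ g ≠ 0 ∧ g ≤ x} with hT
    have hxT : x ∈ T := ⟨hx, hx0, le_refl x⟩
    have hTfin : T.Finite :=
      Set.Finite.subset (Set.finite_Icc 0 x) (fun g hg => ⟨fun j => Nat.zero_le _, hg.2.2⟩)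
    obtain ⟨g, hgT, hgmin⟩ := Set.exists_min_image T (fun g => ∑ j, g j) hTfin ⟨x, hxT⟩
    refine ⟨g, ⟨hgT.1, hgT.2.1, ?_⟩, hgT.2.2⟩
    intro h hh hh0 hhg
    have hhT : h ∈ T := ⟨hh, hh0, le_trans hhg hgT.2.2⟩
    have h1 : ∑ j, g j ≤ ∑ j, h j := hgmin h hhT
    funext j
    by_contra hne
    have hlt : h j < g j := lt_of_le_of_ne (hhg j) hne
    have : ∑ j, h j < ∑ j, g j :=
      Finset.sum_lt_sum (fun j _ => hhg j) ⟨j, Finset.mem_univ j, hlt⟩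
    omega
  refine ⟨hMfin.toFinset, ?_, ?_⟩
  · intro f hf
    exact (hMfin.mem_toFinset.mp hf).1
  · intro x hx
    -- strong induction on ∑ j, x j
    generalize hN : (∑ j, x j) = N
    induction N using Nat.strong_induction_on generalizing x with
    | _ N ih =>
      by_cases hx0 : x = 0
      · refine ⟨fun _ => 0, ?_⟩
        simp [hx0]
      · obtain ⟨f, hfM, hfx⟩ := hmin x hx hx0
        set y : Fin n → ℕ := fun j => x j - f j with hy
        have hxy : ∀ j, x j = f j + y j := fun j => by
          have h1 : f j ≤ x j := hfx j
          show x j = f j + (x j - f j)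
          omega
        have hyS : y ∈ S := by
          have hxz : (fun j => (x j : ℤ)) = (fun j => (f j : ℤ)) + fun j => (y j : ℤ) := by
            funext j
            simp only [Pi.add_apply]
            rw [hxy j]
            push_cast
            ring
          have : A.mulVec ((fun j => (f j : ℤ)) + fun j => (y j : ℤ)) = 0 := by
            rw [← hxz]; exact hx
          rw [Matrix.mulVec_add] at this
          have hf0 : A.mulVec (fun j => (f j : ℤ)) = 0 := hfM.1
          rw [hf0, zero_add] at this
          exact this
        have hflt : 0 < ∑ j, f j := by
          rcases Function.ne_iff.mp hfM.2.1 with ⟨j, hj⟩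
          have : 0 < f j := Nat.pos_of_ne_zero hj
          exact Finset.sum_pos' (fun j _ => Nat.zero_le _) ⟨j, Finset.mem_univ j, this⟩
        have hsum : ∑ j, y j < N := by
          have : ∑ j, x j = ∑ j, f j + ∑ j, y j := by
            rw [← Finset.sum_add_distrib]
            exact Finset.sum_congr rfl fun j _ => hxy j
          omega
        obtain ⟨c, hc⟩ := ih (∑ j, y j) hsum y hyS rfl
        refine ⟨fun g => c g + (if g = f then 1 else 0), ?_⟩
        have hfF : f ∈ hMfin.toFinset := hMfin.mem_toFinset.mpr hfM
        have : x = y + f := by funext j; have := hxy j; simp [Pi.add_apply]; omega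
        rw [this, hc]
        rw [show (∑ g ∈ hMfin.toFinset, (c g + if g = f then 1 else 0) • g)
            = (∑ g ∈ hMfin.toFinset, c g • g) + ∑ g ∈ hMfin.toFinset,
              (if g = f then 1 else 0) • g by
          rw [← Finset.sum_add_distrib]
          exact Finset.sum_congr rfl fun g _ => by rw [add_smul]]
        congr 1
        simp [ite_smul, Finset.sum_ite_eq', hfF]
end

section
/- The set of fundamental solutions of a homogeneous integer linear system is finite: if A is an integer matrix, then the set of non-negative integer solutions x of Ax = 0 that cannot be written as a sum of two nonzero non-negative integer solutions is finite. -/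
/-- The set of fundamental solutions of a homogeneous integer linear system is finite. -/
theorem fundamental_solutions_finite (m n : ℕ) (A : Matrix (Fin m) (Fin n) ℤ) :
    {x : Fin n → ℕ | A.mulVec (fun j => (x j : ℤ)) = 0 ∧ x ≠ 0 ∧
      ¬ ∃ y z : Fin n → ℕ, A.mulVec (fun j => (y j : ℤ)) = 0 ∧ y ≠ 0 ∧
          A.mulVec (fun j => (z j : ℤ)) = 0 ∧ z ≠ 0 ∧ x = y + z}.Finite := by
  set S := {x : Fin n → ℕ | A.mulVec (fun j => (x j : ℤ)) = 0 ∧ x ≠ 0 ∧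
      ¬ ∃ y z : Fin n → ℕ, A.mulVec (fun j => (y j : ℤ)) = 0 ∧ y ≠ 0 ∧
          A.mulVec (fun j => (z j : ℤ)) = 0 ∧ z ≠ 0 ∧ x = y + z} with hS
  have hanti : IsAntichain (· ≤ ·) S := by
    intro a ha b hb hne hle
    obtain ⟨hbA, hbne, hbfund⟩ := hb
    apply hbfund
    refine ⟨a, b - a, ha.1, ha.2.1, ?_, ?_, ?_⟩
    · have hcast : (fun j => (((b - a) j : ℕ) : ℤ)) =
          (fun j => (b j : ℤ)) - (fun j => (a j : ℤ)) := by
        funext j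
        simp [Nat.cast_sub (hle j)]
      rw [hcast, Matrix.mulVec_sub, hbA, ha.1, sub_zero]
    · intro h
      apply hne
      funext j
      have := congrFun h j
      simp only [Pi.zero_apply] at this
      have := Nat.sub_eq_zero_iff_le.mp this
      exact le_antisymm (hle j) this
    · funext j
      simp [Nat.add_sub_cancel' (hle j)]
  have hpwo : Set.IsPWO S := Set.isPWO_of_wellQuasiOrderedLE S
  exact hanti.finite_of_partiallyWellOrderedOn hpwo
end
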